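/- Coercivity of the rescaled dissipation: Let 0 < M < 1 and let f : [0,∞) → (0,∞) be a C¹ function with ∫₀^∞ f(z) dz = M, finite moments ∫₀^∞ z f(z) dz < ∞ and ∫₀^∞ z² f(z) dz < ∞, f'²/f integrable on (0,∞), and f(z) → 0, z f(z) → 0 as z → ∞. Then ∫₀^∞ f(z) (f'(z)/f(z) + z + f(0))² dz ≥ (M + 1/M − 2) f(0)² − 2M. -/

import Mathlib

open MeasureTheory Set Filter

/-- Elementary AM–GM type bound: `|a| ≤ (a²/b + b)/2` for `b > 0`. -/
lemma abs_le_sq_div_add_div_two (a b : ℝ) (hb : 0 < b) : |a| ≤ (a ^ 2 / b + b) / 2 := by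
  have h1 : 2 * |a| * b ≤ a ^ 2 + b ^ 2 := by
    nlinarith [sq_nonneg (|a| - b), sq_abs a]
  have h2 : |a| ≤ (a ^ 2 + b ^ 2) / (2 * b) := by
    rw [le_div_iff₀ (by positivity)]
    linarith
  calc |a| ≤ (a ^ 2 + b ^ 2) / (2 * b) := h2
    _ = (a ^ 2 / b + b) / 2 := by field_simp

/-- Coercivity of the rescaled dissipation: if `0 < M < 1` and `f > 0` is C¹
with mass `M`, finite first and second moments, `f'²/f` integrable and
`f, z f → 0` at infinity, then
`∫ f (f'/f + z + f(0))² ≥ (M + 1/M − 2) f(0)² − 2M`. -/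
theorem rescaled_dissipation_coercivity
    (M : ℝ) (hM0 : 0 < M) (hM1 : M < 1)
    (f f' : ℝ → ℝ)
    (hpos : ∀ z : ℝ, 0 ≤ z → 0 < f z)
    (hderiv : ∀ z : ℝ, 0 ≤ z → HasDerivAt f (f' z) z)
    (hcont : ContinuousOn f' (Ici 0))
    (hint : IntegrableOn f (Ioi 0))
    (hmass : ∫ z in Ioi (0:ℝ), f z = M)
    (hint1 : IntegrableOn (fun z => z * f z) (Ioi 0))
    (hint2 : IntegrableOn (fun z => z ^ 2 * f z) (Ioi 0))
    (hfisher : IntegrableOn (fun z => (f' z) ^ 2 / f z) (Ioi 0))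
    (hlim : Tendsto f atTop (nhds 0))
    (hlim1 : Tendsto (fun z => z * f z) atTop (nhds 0)) :
    (M + 1 / M - 2) * (f 0) ^ 2 - 2 * M
      ≤ ∫ z in Ioi (0:ℝ), f z * (f' z / f z + z + f 0) ^ 2 := by
  have hf0pos : 0 < f 0 := hpos 0 le_rfl
  -- measurability of f'
  have hmeas' : AEStronglyMeasurable f' (volume.restrict (Ioi 0)) :=
    (hcont.mono (Ioi_subset_Ici le_rfl)).aestronglyMeasurable measurableSet_Ioi
  -- integrability of f'
  have hintf' : IntegrableOn f' (Ioi 0) := by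
    apply Integrable.mono' ((hfisher.add hint).div_const 2) hmeas'
    filter_upwards [ae_restrict_mem measurableSet_Ioi] with z hz
    have hfz := hpos z hz.le
    have := abs_le_sq_div_add_div_two (f' z) (f z) hfz
    simpa [Real.norm_eq_abs] using this
  -- integrability of z * f'
  have hintzf' : IntegrableOn (fun z => z * f' z) (Ioi 0) := by
    apply Integrable.mono' ((hfisher.add hint2).div_const 2)
      ((continuous_id.continuousOn.mul (hcont.mono (Ioi_subset_Ici le_rfl))).aestronglyMeasurable
        measurableSet_Ioi)
    filter_upwards [ae_restrict_mem measurableSet_Ioi] with z hz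
    have hz0 : (0:ℝ) < z := hz
    have hfz := hpos z hz.le
    have hb : 0 < z ^ 2 * f z := by positivity
    have h := abs_le_sq_div_add_div_two (z * f' z) (z ^ 2 * f z) hb
    have heq : (z * f' z) ^ 2 / (z ^ 2 * f z) = (f' z) ^ 2 / f z := by
      field_simp
    rw [heq] at h
    simpa [Real.norm_eq_abs, abs_mul, abs_of_pos hz0] using h
  -- ∫ f' = -f 0
  have hI1 : ∫ z in Ioi (0:ℝ), f' z = 0 - f 0 :=
    integral_Ioi_of_hasDerivAt_of_tendsto
      (hderiv 0 le_rfl).continuousAt.continuousWithinAt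
      (fun x hx => hderiv x (le_of_lt hx)) hintf' hlim
  -- ∫ (f + z f') = 0
  have hI2 : ∫ z in Ioi (0:ℝ), (f z + z * f' z) = 0 - 0 * f 0 := by
    refine integral_Ioi_of_hasDerivAt_of_tendsto
      ((continuousAt_id.mul (hderiv 0 le_rfl).continuousAt).continuousWithinAt)
      (fun x hx => ?_) (hint.add hintzf') hlim1
    have h := (hasDerivAt_id x).mul (hderiv x (le_of_lt hx))
    simpa [add_comm] using h
  have hIzf' : ∫ z in Ioi (0:ℝ), z * f' z = -M := by
    have := integral_add hint hintzf'
    rw [hI2, hmass] at this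
    linarith [this]
  -- trace inequality: f 0 ^ 2 ≤ M * A
  set A := ∫ z in Ioi (0:ℝ), (f' z) ^ 2 / f z with hAdef
  have hA0 : 0 ≤ A :=
    setIntegral_nonneg measurableSet_Ioi fun z hz => div_nonneg (sq_nonneg _) (hpos z hz.le).le
  have htrace : f 0 ^ 2 ≤ M * A := by
    set t : ℝ := M / f 0 with htdef
    have ht : 0 < t := by positivity
    have habs : ∫ z in Ioi (0:ℝ), |f' z|
        ≤ ∫ z in Ioi (0:ℝ), (t * ((f' z) ^ 2 / f z) + f z / t) / 2 := by
      refine setIntegral_mono_on hintf'.abs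
        (((hfisher.const_mul t).add (hint.div_const t)).div_const 2) measurableSet_Ioi
        fun z hz => ?_
      have hfz := hpos z (le_of_lt hz)
      have hb : 0 < f z / t := by positivity
      have h := abs_le_sq_div_add_div_two (f' z) (f z / t) hb
      have heq : (f' z) ^ 2 / (f z / t) = t * ((f' z) ^ 2 / f z) := by
        field_simp
      rw [heq] at h
      exact h
    have hInt : ∫ z in Ioi (0:ℝ), (t * ((f' z) ^ 2 / f z) + f z / t) / 2
        = (t * A + M / t) / 2 := by
      rw [integral_div, integral_add (hfisher.const_mul t) (hint.div_const t),
        integral_const_mul, integral_div, hmass]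
    have hnorm : f 0 ≤ ∫ z in Ioi (0:ℝ), |f' z| := by
      have h1 : |∫ z in Ioi (0:ℝ), f' z| ≤ ∫ z in Ioi (0:ℝ), |f' z| := by
        simpa [Real.norm_eq_abs] using
          norm_integral_le_integral_norm (μ := volume.restrict (Ioi 0)) f'
      rw [hI1] at h1
      calc f 0 ≤ |0 - f 0| := by rw [abs_sub_comm]; simpa using le_abs_self (f 0)
        _ ≤ _ := h1
    have hkey : f 0 ≤ (t * A + M / t) / 2 := by
      rw [← hInt]; exact hnorm.trans habs
    have hMt : M / t = f 0 := by
      rw [htdef]; field_simp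
    rw [hMt, htdef] at hkey
    have := mul_le_mul_of_nonneg_right hkey hf0pos.le
    have hMA : M / f 0 * A * f 0 = M * A := by field_simp
    nlinarith [this]
  -- expansion of the square
  have hexp :
      ∫ z in Ioi (0:ℝ), f z * (f' z / f z + z + f 0) ^ 2
        = ∫ z in Ioi (0:ℝ), ((f' z) ^ 2 / f z + z ^ 2 * f z + (f 0) ^ 2 * f z
            + 2 * (z * f' z) + 2 * f 0 * f' z + 2 * f 0 * (z * f z)) := by
    refine setIntegral_congr_fun measurableSet_Ioi fun z hz => ?_
    have hfz := (hpos z (le_of_lt hz)).ne'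
    field_simp
    ring
  rw [hexp]
  have hB1 : 0 ≤ ∫ z in Ioi (0:ℝ), z * f z :=
    setIntegral_nonneg measurableSet_Ioi fun z hz => mul_nonneg (le_of_lt hz) (hpos z (le_of_lt hz)).le
  have hB2 : 0 ≤ ∫ z in Ioi (0:ℝ), z ^ 2 * f z :=
    setIntegral_nonneg measurableSet_Ioi fun z hz =>
      mul_nonneg (sq_nonneg z) (hpos z (le_of_lt hz)).le
  -- split the integral
  have I2' : IntegrableOn (fun z => (f' z) ^ 2 / f z + z ^ 2 * f z) (Ioi 0) :=
    hfisher.add hint2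
  have I3' : IntegrableOn (fun z => (f' z) ^ 2 / f z + z ^ 2 * f z
      + (f 0) ^ 2 * f z) (Ioi 0) := I2'.add (hint.const_mul _)
  have I4' : IntegrableOn (fun z => (f' z) ^ 2 / f z + z ^ 2 * f z
      + (f 0) ^ 2 * f z + 2 * (z * f' z)) (Ioi 0) := I3'.add (hintzf'.const_mul 2)
  have I5' : IntegrableOn (fun z => (f' z) ^ 2 / f z + z ^ 2 * f z
      + (f 0) ^ 2 * f z + 2 * (z * f' z) + 2 * f 0 * f' z) (Ioi 0) :=
    I4'.add (hintf'.const_mul _)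
  have e1 : ∫ z in Ioi (0:ℝ), ((f' z) ^ 2 / f z + z ^ 2 * f z + (f 0) ^ 2 * f z
        + 2 * (z * f' z) + 2 * f 0 * f' z + 2 * f 0 * (z * f z))
      = (∫ z in Ioi (0:ℝ), ((f' z) ^ 2 / f z + z ^ 2 * f z + (f 0) ^ 2 * f z
        + 2 * (z * f' z) + 2 * f 0 * f' z)) + ∫ z in Ioi (0:ℝ), 2 * f 0 * (z * f z) :=
    integral_add I5' (hint1.const_mul _)
  have e2 : ∫ z in Ioi (0:ℝ), ((f' z) ^ 2 / f z + z ^ 2 * f z + (f 0) ^ 2 * f z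
        + 2 * (z * f' z) + 2 * f 0 * f' z)
      = (∫ z in Ioi (0:ℝ), ((f' z) ^ 2 / f z + z ^ 2 * f z + (f 0) ^ 2 * f z
        + 2 * (z * f' z))) + ∫ z in Ioi (0:ℝ), 2 * f 0 * f' z :=
    integral_add I4' (hintf'.const_mul _)
  have e3 : ∫ z in Ioi (0:ℝ), ((f' z) ^ 2 / f z + z ^ 2 * f z + (f 0) ^ 2 * f z
        + 2 * (z * f' z))
      = (∫ z in Ioi (0:ℝ), ((f' z) ^ 2 / f z + z ^ 2 * f z + (f 0) ^ 2 * f z))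
        + ∫ z in Ioi (0:ℝ), 2 * (z * f' z) :=
    integral_add I3' (hintzf'.const_mul 2)
  have e4 : ∫ z in Ioi (0:ℝ), ((f' z) ^ 2 / f z + z ^ 2 * f z + (f 0) ^ 2 * f z)
      = (∫ z in Ioi (0:ℝ), ((f' z) ^ 2 / f z + z ^ 2 * f z))
        + ∫ z in Ioi (0:ℝ), (f 0) ^ 2 * f z :=
    integral_add I2' (hint.const_mul _)
  have e5 : ∫ z in Ioi (0:ℝ), ((f' z) ^ 2 / f z + z ^ 2 * f z)
      = A + ∫ z in Ioi (0:ℝ), z ^ 2 * f z :=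
    integral_add hfisher hint2
  have m1 : ∫ z in Ioi (0:ℝ), (f 0) ^ 2 * f z = (f 0) ^ 2 * M := by
    rw [integral_const_mul, hmass]
  have m2 : ∫ z in Ioi (0:ℝ), 2 * (z * f' z) = 2 * (-M) := by
    rw [integral_const_mul, hIzf']
  have m3 : ∫ z in Ioi (0:ℝ), 2 * f 0 * f' z = 2 * f 0 * (0 - f 0) := by
    rw [integral_const_mul, hI1]
  have m4 : ∫ z in Ioi (0:ℝ), 2 * f 0 * (z * f z)
      = 2 * f 0 * ∫ z in Ioi (0:ℝ), z * f z := integral_const_mul _ _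
  have hsplit :
      ∫ z in Ioi (0:ℝ), ((f' z) ^ 2 / f z + z ^ 2 * f z + (f 0) ^ 2 * f z
            + 2 * (z * f' z) + 2 * f 0 * f' z + 2 * f 0 * (z * f z))
        = A + (∫ z in Ioi (0:ℝ), z ^ 2 * f z) + (f 0) ^ 2 * M
            + 2 * (-M) + 2 * f 0 * (0 - f 0)
            + 2 * f 0 * (∫ z in Ioi (0:ℝ), z * f z) := by
    rw [e1, e2, e3, e4, e5, m1, m2, m3, m4]
  rw [hsplit]
  have hAge : f 0 ^ 2 / M ≤ A := by
    rw [div_le_iff₀ hM0]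
    linarith [htrace]
  have hexp2 : (M + 1 / M - 2) * f 0 ^ 2 = M * f 0 ^ 2 + f 0 ^ 2 / M - 2 * f 0 ^ 2 := by
    ring
  nlinarith [mul_nonneg (mul_nonneg (by norm_num : (0:ℝ) ≤ 2) hf0pos.le) hB1]
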